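/- (Milliken–Taylor Theorem.) Let k, r ≥ 1 and let [ℕ]^k = A_1 ∪ … ∪ A_r. Then there exist i ∈ {1,…,r} and a sequence ⟨x_n⟩_{n=0}^∞ in ℕ such that [FS(⟨x_n⟩_{n=0}^∞)]^k_< ⊆ A_i. -/

import Mathlib

open Filter Set

attribute [local instance] Ultrafilter.add Ultrafilter.addSemigroup

namespace MT


variable (p : Ultrafilter ℕ+)

/-- The star operation. -/
def st (B : Set ℕ+) : Set ℕ+ := {a | a ∈ B ∧ {y | a + y ∈ B} ∈ p}

theorem st_subset (B : Set ℕ+) : st p B ⊆ B := fun _ h => h.1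

theorem st_mem (hp : p + p = p) {B : Set ℕ+} (hB : B ∈ p) : st p B ∈ p := by
  have h2 : {a | {y | a + y ∈ B} ∈ p} ∈ p := by
    have : B ∈ (p + p : Ultrafilter ℕ+) := by rw [hp]; exact hB
    exact (Ultrafilter.eventually_add p p (· ∈ B)).1 this
  exact inter_mem hB h2

theorem st_shift (hp : p + p = p) {B : Set ℕ+} {a : ℕ+} (ha : a ∈ st p B) :
    {y | a + y ∈ st p B} ∈ p := by
  obtain ⟨-, hC⟩ := ha
  have h2 : {y | {z | (a + y) + z ∈ B} ∈ p} ∈ p := by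
    have : {y | a + y ∈ B} ∈ (p + p : Ultrafilter ℕ+) := by rw [hp]; exact hC
    have h3 := (Ultrafilter.eventually_add p p (fun m => a + m ∈ B)).1 this
    filter_upwards [h3] with y hy
    have : {z | a + (y + z) ∈ B} ∈ p := hy
    convert this using 2 with z
    simp [add_assoc]
  filter_upwards [hC, h2] with y h1 h2
  exact ⟨h1, h2⟩

theorem st_st (hp : p + p = p) (B : Set ℕ+) : st p (st p B) = st p B := by
  apply Set.Subset.antisymm (st_subset _ _)
  intro a ha
  exact ⟨ha, st_shift p hp ha⟩

/-- Tail sets belong to any idempotent ultrafilter on `ℕ+`. -/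
theorem tail_mem (hp : p + p = p) (N : ℕ) : {y : ℕ+ | N < (y : ℕ)} ∈ p := by
  by_contra h
  have h2 : {y : ℕ+ | (y : ℕ) ≤ N} ∈ p := by
    have := (Ultrafilter.compl_mem_iff_notMem).2 h
    convert this using 1
    ext y; simp [not_lt]
  have hfin : {y : ℕ+ | (y : ℕ) ≤ N}.Finite := by
    have : {y : ℕ+ | (y : ℕ) ≤ N} = ((↑) : ℕ+ → ℕ) ⁻¹' (Set.Iic N) := rfl
    rw [this]
    exact Set.Finite.preimage (Set.injOn_of_injective PNat.coe_injective) (Set.finite_Iic N)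
  obtain ⟨a, -, hpa⟩ := Ultrafilter.eq_pure_of_finite_mem hfin h2
  have key : ∀ᶠ (m : ℕ+) in ↑(p + p : Ultrafilter ℕ+), m = a := by
    rw [hp, hpa]; exact eventually_pure.2 rfl
  rw [Ultrafilter.eventually_add, hpa] at key
  simp only [Ultrafilter.coe_pure, eventually_pure] at key
  have : (a : ℕ) + (a : ℕ) = (a : ℕ) := by
    have := congrArg (fun z : ℕ+ => (z : ℕ)) key
    simpa using this
  have := a.pos
  omega

theorem exists_pick {r : ℕ} (f : ℕ+ → Fin r) : ∃ i : Fin r, {y | f y = i} ∈ p := by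
  by_contra hc
  push_neg at hc
  have : ∀ i : Fin r, {y | f y = i}ᶜ ∈ p := fun i =>
    (Ultrafilter.compl_mem_iff_notMem).2 (hc i)
  have h2 : (⋂ i : Fin r, {y | f y = i}ᶜ) ∈ p := iInter_mem.2 this
  have h3 : (⋂ i : Fin r, {y : ℕ+ | f y = i}ᶜ) = ∅ := by
    ext y; simp
  rw [h3] at h2
  simp at h2

/-- A value of `f` attained on a `p`-large set. -/
noncomputable def pick {r : ℕ} (f : ℕ+ → Fin r) : Fin r := (exists_pick p f).choose

theorem pick_spec {r : ℕ} (f : ℕ+ → Fin r) :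
    {y | f y = pick p f} ∈ p := (exists_pick p f).choose_spec





section

variable {r : ℕ} (χ : List ℕ+ → Fin r) (k : ℕ)

/-- Iterated `p`-limit colours. -/
noncomputable def gAux : ℕ → List ℕ+ → Fin r
  | 0, w => χ w
  | m+1, w => pick p (fun y => gAux m (w ++ [y]))

theorem gAux_spec (m : ℕ) (w : List ℕ+) :
    {y | gAux p χ m (w ++ [y]) = gAux p χ (m+1) w} ∈ p := pick_spec p _

/-- positive sum -/
def psum (x : ℕ → ℕ+) (β : Finset ℕ) : ℕ+ :=
  ⟨max 1 (∑ t ∈ β, (x t : ℕ)), lt_of_lt_of_le one_pos (le_max_left _ _)⟩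

theorem psum_coe (x : ℕ → ℕ+) {β : Finset ℕ} (h : β.Nonempty) :
    (psum x β : ℕ) = ∑ t ∈ β, (x t : ℕ) := by
  obtain ⟨t, ht⟩ := h
  have h1 : 1 ≤ ∑ t ∈ β, (x t : ℕ) :=
    le_trans (x t).pos (Finset.single_le_sum (f := fun t => ((x t : ℕ))) (fun _ _ => Nat.zero_le _) ht)
  simp [psum, max_eq_right h1]

theorem psum_congr {x x' : ℕ → ℕ+} {β : Finset ℕ} (h : ∀ t ∈ β, x t = x' t) :
    psum x β = psum x' β := by
  apply PNat.coe_injective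
  simp only [psum, PNat.mk_coe]
  congr 1
  exact Finset.sum_congr rfl (fun t ht => by rw [h t ht])

theorem psum_insert (x : ℕ → ℕ+) {β : Finset ℕ} {n : ℕ} (hn : n ∉ β) (hβ : β.Nonempty) :
    psum x (insert n β) = psum x β + x n := by
  apply PNat.coe_injective
  rw [psum_coe x (Finset.insert_nonempty n β), PNat.add_coe, psum_coe x hβ, Finset.sum_insert hn]
  ring

/-- all sums of subsets of `range n` -/
def psums (x : ℕ → ℕ+) (n : ℕ) : Finset ℕ+ := (Finset.range n).powerset.image (psum x)

/-- One step of the construction. -/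
noncomputable def step (n : ℕ) (hist : ℕ → Set ℕ+ × ℕ+) : Set ℕ+ × ℕ+ :=
  let xh : ℕ → ℕ+ := fun m => (hist m).2
  let Bh : ℕ → Set ℕ+ := fun m => (hist m).1
  let X : Set ℕ+ :=
    {y : ℕ+ | (∑ t ∈ Finset.range n, (xh t : ℕ)) < (y : ℕ)}
    ∩ (⋂ m, ⋂ (_ : m < n), Bh m)
    ∩ (⋂ (β : Finset ℕ), ⋂ (_ : β ⊆ Finset.range n), ⋂ (h : β.Nonempty),
        {y | psum xh β + y ∈ Bh (β.min' h)})
    ∩ (⋂ (w : List ℕ+), ⋂ (_ : w.length < k ∧ ∀ s ∈ w, s ∈ psums xh n),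
        {y | gAux p χ (k - w.length - 1) (w ++ [y]) = gAux p χ (k - w.length) w})
  let B := st p X
  (B, Classical.epsilon (· ∈ B))

theorem step_congr (n : ℕ) (h1 h2 : ℕ → Set ℕ+ × ℕ+) (h : ∀ m < n, h1 m = h2 m) :
    step p χ k n h1 = step p χ k n h2 := by
  have hx : ∀ m < n, (h1 m).2 = (h2 m).2 := fun m hm => by rw [h m hm]
  have hB : ∀ m < n, (h1 m).1 = (h2 m).1 := fun m hm => by rw [h m hm]
  have hpsum : ∀ β : Finset ℕ, β ⊆ Finset.range n →
      psum (fun m => (h1 m).2) β = psum (fun m => (h2 m).2) β := by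
    intro β hβ
    exact psum_congr (fun t ht => hx t (Finset.mem_range.mp (hβ ht)))
  have hpsums : psums (fun m => (h1 m).2) n = psums (fun m => (h2 m).2) n := by
    unfold psums
    apply Finset.image_congr
    intro β hβ
    simp only [Finset.coe_powerset, Set.mem_preimage, Set.mem_powerset_iff,
      Finset.coe_subset] at hβ
    exact hpsum β hβ
  unfold step
  simp only
  have hX : ({y : ℕ+ | (∑ t ∈ Finset.range n, ((h1 t).2 : ℕ)) < (y : ℕ)}
    ∩ (⋂ m, ⋂ (_ : m < n), (h1 m).1)
    ∩ (⋂ (β : Finset ℕ), ⋂ (_ : β ⊆ Finset.range n), ⋂ (hb : β.Nonempty),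
        {y | psum (fun m => (h1 m).2) β + y ∈ (h1 (β.min' hb)).1})
    ∩ (⋂ (w : List ℕ+), ⋂ (_ : w.length < k ∧ ∀ s ∈ w, s ∈ psums (fun m => (h1 m).2) n),
        {y | gAux p χ (k - w.length - 1) (w ++ [y]) = gAux p χ (k - w.length) w}))
    = ({y : ℕ+ | (∑ t ∈ Finset.range n, ((h2 t).2 : ℕ)) < (y : ℕ)}
    ∩ (⋂ m, ⋂ (_ : m < n), (h2 m).1)
    ∩ (⋂ (β : Finset ℕ), ⋂ (_ : β ⊆ Finset.range n), ⋂ (hb : β.Nonempty),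
        {y | psum (fun m => (h2 m).2) β + y ∈ (h2 (β.min' hb)).1})
    ∩ (⋂ (w : List ℕ+), ⋂ (_ : w.length < k ∧ ∀ s ∈ w, s ∈ psums (fun m => (h2 m).2) n),
        {y | gAux p χ (k - w.length - 1) (w ++ [y]) = gAux p χ (k - w.length) w})) := by
    have e1 : (∑ t ∈ Finset.range n, ((h1 t).2 : ℕ)) = ∑ t ∈ Finset.range n, ((h2 t).2 : ℕ) :=
      Finset.sum_congr rfl (fun t ht => by rw [hx t (Finset.mem_range.mp ht)])
    have e2 : (⋂ m, ⋂ (_ : m < n), (h1 m).1) = (⋂ m, ⋂ (_ : m < n), (h2 m).1) :=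
      Set.iInter_congr fun m => Set.iInter_congr fun hm => hB m hm
    have e3 : (⋂ (β : Finset ℕ), ⋂ (_ : β ⊆ Finset.range n), ⋂ (hb : β.Nonempty),
        {y | psum (fun m => (h1 m).2) β + y ∈ (h1 (β.min' hb)).1})
        = (⋂ (β : Finset ℕ), ⋂ (_ : β ⊆ Finset.range n), ⋂ (hb : β.Nonempty),
        {y | psum (fun m => (h2 m).2) β + y ∈ (h2 (β.min' hb)).1}) := by
      apply Set.iInter_congr; intro β
      apply Set.iInter_congr; intro hβ
      apply Set.iInter_congr; intro hb
      rw [hpsum β hβ, hB (β.min' hb) (Finset.mem_range.mp (hβ (β.min'_mem hb)))]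
    rw [e1, e2, e3, hpsums]
  rw [hX]

variable (hk : 1 ≤ k)

/-- history of the construction -/
noncomputable def histF : ℕ → ℕ → Set ℕ+ × ℕ+
  | 0 => fun _ => (Set.univ, 1)
  | n+1 => fun m => if m = n then step p χ k n (histF n) else histF n m

/-- The pair `(Bₙ, xₙ)`. -/
noncomputable def BX (n : ℕ) : Set ℕ+ × ℕ+ := step p χ k n (histF p χ k n)

theorem histF_eq {m n : ℕ} (h : m < n) : histF p χ k n m = BX p χ k m := by
  induction n with
  | zero => omega
  | succ n ih =>
    unfold histF
    by_cases hm : m = n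
    · subst hm; simp [BX]
    · have : m < n := by omega
      simp [hm, ih this]

theorem BX_eq (n : ℕ) : BX p χ k n = step p χ k n (fun m => BX p χ k m) := by
  unfold BX
  exact step_congr p χ k n _ _ (fun m hm => histF_eq p χ k hm)

/-- the sequence -/
noncomputable def xseq (n : ℕ) : ℕ+ := (BX p χ k n).2
/-- the sets -/
noncomputable def Bset (n : ℕ) : Set ℕ+ := (BX p χ k n).1

/-- the big intersection -/
noncomputable def Xset (n : ℕ) : Set ℕ+ :=
  {y : ℕ+ | (∑ t ∈ Finset.range n, (xseq p χ k t : ℕ)) < (y : ℕ)}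
    ∩ (⋂ m, ⋂ (_ : m < n), Bset p χ k m)
    ∩ (⋂ (β : Finset ℕ), ⋂ (_ : β ⊆ Finset.range n), ⋂ (h : β.Nonempty),
        {y | psum (xseq p χ k) β + y ∈ Bset p χ k (β.min' h)})
    ∩ (⋂ (w : List ℕ+), ⋂ (_ : w.length < k ∧ ∀ s ∈ w, s ∈ psums (xseq p χ k) n),
        {y | gAux p χ (k - w.length - 1) (w ++ [y]) = gAux p χ (k - w.length) w})

theorem Bset_eq (n : ℕ) : Bset p χ k n = st p (Xset p χ k n) :=
  congrArg Prod.fst (BX_eq p χ k n)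

theorem xseq_eq (n : ℕ) :
    xseq p χ k n = Classical.epsilon (· ∈ st p (Xset p χ k n)) := by
  have h := congrArg Prod.snd (BX_eq p χ k n)
  rw [xseq, h]
  rfl


theorem finite_lists (F : Finset ℕ+) (k : ℕ) :
    {w : List ℕ+ | w.length < k ∧ ∀ s ∈ w, s ∈ F}.Finite := by
  have h := (List.finite_length_lt {s : ℕ+ // s ∈ F} k).image (List.map Subtype.val)
  apply h.subset
  rintro w ⟨hlen, hmem⟩
  refine ⟨w.attach.map (fun s => ⟨s.1, hmem _ s.2⟩), by simpa using hlen, ?_⟩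
  simp [List.map_map]

variable (hp : p + p = p)
include hp

theorem key (n : ℕ) :
    Bset p χ k n ∈ p ∧
      (∀ β : Finset ℕ, (hb : β.Nonempty) → β ⊆ Finset.range (n+1) → n ∈ β →
        psum (xseq p χ k) β ∈ Bset p χ k (β.min' hb)) := by
  induction n using Nat.strong_induction_on with
  | _ n ih =>
  have hXmem : Xset p χ k n ∈ p := by
    unfold Xset
    refine inter_mem (inter_mem (inter_mem ?_ ?_) ?_) ?_
    · exact tail_mem p hp _
    · exact (Filter.biInter_mem (Set.finite_Iio n)).2 (fun m hm => (ih m hm).1)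
    · refine (Filter.biInter_mem ((Finset.range n).powerset.finite_toSet.subset ?_)).2 ?_
      · intro β hβ
        exact Finset.mem_coe.mpr (Finset.mem_powerset.mpr hβ)
      intro β hβ
      by_cases h0 : β.Nonempty
      · have heq : (⋂ (h : β.Nonempty),
            {y | psum (xseq p χ k) β + y ∈ Bset p χ k (β.min' h)}) =
            {y | psum (xseq p χ k) β + y ∈ Bset p χ k (β.min' h0)} := by
          ext y; simp only [Set.mem_iInter]
          exact ⟨fun h => h h0, fun h _ => h⟩
        rw [heq]
        have hmax := β.max'_mem h0
        have hmaxlt : β.max' h0 < n := Finset.mem_range.mp (hβ hmax)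
        have hsub : β ⊆ Finset.range (β.max' h0 + 1) := by
          intro t ht
          simp [Nat.lt_succ_iff, Finset.le_max' β t ht]
        have hmem := (ih (β.max' h0) hmaxlt).2 β h0 hsub hmax
        rw [Bset_eq] at hmem ⊢
        exact st_shift p hp hmem
      · have heq : (⋂ (h : β.Nonempty),
            {y | psum (xseq p χ k) β + y ∈ Bset p χ k (β.min' h)}) = Set.univ := by
          ext y; simp only [Set.mem_iInter, Set.mem_univ, iff_true]
          intro h; exact absurd h h0
        rw [heq]; exact univ_mem
    · refine (Filter.biInter_mem (finite_lists (psums (xseq p χ k) n) k)).2 ?_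
      intro w hw
      obtain ⟨hlen, -⟩ := hw
      have h1 : k - w.length - 1 + 1 = k - w.length := by omega
      have := gAux_spec p χ (k - w.length - 1) w
      rwa [h1] at this
  have hBmem : Bset p χ k n ∈ p := by
    rw [Bset_eq]; exact st_mem p hp hXmem
  have hxmem : xseq p χ k n ∈ Bset p χ k n := by
    rw [xseq_eq, ← Bset_eq]
    exact Classical.epsilon_spec (Ultrafilter.nonempty_of_mem hBmem)
  refine ⟨hBmem, ?_⟩
  intro β hb hβsub hnβ
  by_cases hsing : β = {n}
  · subst hsing
    have : psum (xseq p χ k) {n} = xseq p χ k n := by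
      apply PNat.coe_injective
      rw [psum_coe _ (Finset.singleton_nonempty n)]
      simp
    rw [this]
    simpa using hxmem
  · set βe := β.erase n with hβe
    have hβeN : βe.Nonempty := by
      by_contra h
      rw [Finset.not_nonempty_iff_eq_empty] at h
      apply hsing
      apply Finset.eq_singleton_iff_unique_mem.mpr
      refine ⟨hnβ, fun b hbβ => ?_⟩
      by_contra hbn
      have : b ∈ βe := Finset.mem_erase.mpr ⟨hbn, hbβ⟩
      rw [h] at this
      simp at this
    have hins : insert n βe = β := Finset.insert_erase hnβ
    have hsum : psum (xseq p χ k) β = psum (xseq p χ k) βe + xseq p χ k n := by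
      rw [← hins, psum_insert _ (Finset.notMem_erase n β) hβeN]
    have hesub : βe ⊆ Finset.range n := by
      intro t ht
      rcases Finset.mem_erase.mp ht with ⟨htn, htβ⟩
      have := Finset.mem_range.mp (hβsub htβ)
      simp only [Finset.mem_range]
      omega
    have hmin : β.min' hb = βe.min' hβeN := by
      apply le_antisymm
      · exact Finset.min'_le _ _ (Finset.mem_of_mem_erase (βe.min'_mem hβeN))
      · apply Finset.min'_le
        refine Finset.mem_erase.mpr ⟨?_, β.min'_mem hb⟩
        have h1 := Finset.mem_range.mp (hesub (βe.min'_mem hβeN))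
        have h2 : β.min' hb ≤ βe.min' hβeN :=
          Finset.min'_le _ _ (Finset.mem_of_mem_erase (βe.min'_mem hβeN))
        omega
    have hxX : xseq p χ k n ∈ Xset p χ k n := by
      have := hxmem
      rw [Bset_eq] at this
      exact st_subset p _ this
    have hcomp : xseq p χ k n ∈
        {y | psum (xseq p χ k) βe + y ∈ Bset p χ k (βe.min' hβeN)} := by
      have h4 := hxX.1.2
      simp only [Set.mem_iInter] at h4
      exact h4 βe hesub hβeN
    rw [hsum, hmin]
    exact hcomp

theorem Bmem (n : ℕ) : Bset p χ k n ∈ p := (key p χ k hp n).1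

theorem xmem (n : ℕ) : xseq p χ k n ∈ Bset p χ k n := by
  rw [xseq_eq, ← Bset_eq]
  exact Classical.epsilon_spec (Ultrafilter.nonempty_of_mem (Bmem p χ k hp n))

theorem sum_mem {β : Finset ℕ} (hb : β.Nonempty) :
    psum (xseq p χ k) β ∈ Bset p χ k (β.min' hb) := by
  have hmax := β.max'_mem hb
  have hsub : β ⊆ Finset.range (β.max' hb + 1) := by
    intro t ht
    simp [Nat.lt_succ_iff, Finset.le_max' β t ht]
  exact (key p χ k hp (β.max' hb)).2 β hb hsub hmax

omit hp in theorem B_subset_X (n : ℕ) : Bset p χ k n ⊆ Xset p χ k n := by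
  rw [Bset_eq]; exact st_subset p _

theorem tail_bound {n : ℕ} {y : ℕ+} (hy : y ∈ Bset p χ k n) :
    (∑ t ∈ Finset.range n, (xseq p χ k t : ℕ)) < (y : ℕ) :=
  (B_subset_X p χ k n hy).1.1.1

theorem B_comp_w {n : ℕ} {y : ℕ+} (hy : y ∈ Bset p χ k n) {w : List ℕ+}
    (hlen : w.length < k) (hmem : ∀ s ∈ w, s ∈ psums (xseq p χ k) n) :
    gAux p χ (k - w.length - 1) (w ++ [y]) = gAux p χ (k - w.length) w := by
  have h := (B_subset_X p χ k n hy).2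
  simp only [Set.mem_iInter] at h
  exact h w ⟨hlen, hmem⟩

theorem B_mono {m n : ℕ} (h : m < n) : Bset p χ k n ⊆ Bset p χ k m := by
  intro y hy
  have h2 := (B_subset_X p χ k n hy).1.1.2
  simp only [Set.mem_iInter] at h2
  exact h2 m h

omit hp in theorem mem_take_finRange {k l : ℕ} {j : Fin k} (h : j ∈ (List.finRange k).take l) :
    (j : ℕ) < l := by
  rw [List.mem_iff_getElem] at h
  obtain ⟨i, hi, hget⟩ := h
  have hil : i < l := lt_of_lt_of_le hi (by simp [List.length_take])
  rw [List.getElem_take] at hget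
  rw [← hget]
  simpa using hil

omit hp in theorem alpha_subset {k : ℕ} (α : Fin k → Finset ℕ) (hne : ∀ j, (α j).Nonempty)
    (hlt : ∀ j j' : Fin k, j < j' → ∀ s ∈ α j, ∀ t ∈ α j', s < t)
    {j j' : Fin k} (hjj : j < j') :
    α j ⊆ Finset.range ((α j').min' (hne j')) := by
  intro t ht
  exact Finset.mem_range.mpr (hlt j j' hjj t ht _ ((α j').min'_mem (hne j')))

theorem chain (α : Fin k → Finset ℕ) (hne : ∀ j, (α j).Nonempty)
    (hlt : ∀ j j' : Fin k, j < j' → ∀ s ∈ α j, ∀ t ∈ α j', s < t) : ∀ l ≤ k,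
    gAux p χ (k - l) (((List.finRange k).take l).map (fun j => psum (xseq p χ k) (α j)))
      = gAux p χ k [] := by
  intro l
  induction l with
  | zero => intro _; simp
  | succ l ih =>
    intro hl
    have hlk : l < k := hl
    have prev := ih (le_of_lt hlk)
    set sfun : Fin k → ℕ+ := fun j => psum (xseq p χ k) (α j) with hsfun
    set w := ((List.finRange k).take l).map sfun with hw
    have hwlen : w.length = l := by
      simp [hw, List.length_take, min_eq_left (le_of_lt hlk)]
    have hnext : ((List.finRange k).take (l+1)).map sfun = w ++ [sfun ⟨l, hlk⟩] := by
      rw [List.take_succ]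
      have : (List.finRange k)[l]? = some ⟨l, hlk⟩ := by
        rw [List.getElem?_eq_getElem (by simpa using hlk)]
        simp
      rw [this]
      simp [hw]
    set m := (α ⟨l, hlk⟩).min' (hne _) with hm
    have hsmem : sfun ⟨l, hlk⟩ ∈ Bset p χ k m := sum_mem p χ k hp (hne _)
    have hwmem : ∀ e ∈ w, e ∈ psums (xseq p χ k) m := by
      intro e he
      rw [hw, List.mem_map] at he
      obtain ⟨j, hj, rfl⟩ := he
      have hjl : (j : ℕ) < l := mem_take_finRange hj
      have hjlt : j < (⟨l, hlk⟩ : Fin k) := hjl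
      refine Finset.mem_image.mpr ⟨α j, ?_, rfl⟩
      exact Finset.mem_powerset.mpr (alpha_subset α hne hlt hjlt)
    have hstep := B_comp_w p χ k hp hsmem (w := w) (by omega) hwmem
    rw [hwlen] at hstep
    rw [hnext, show k - (l+1) = k - l - 1 from by omega, hstep]
    exact prev

theorem sfun_strictmono (α : Fin k → Finset ℕ) (hne : ∀ j, (α j).Nonempty)
    (hlt : ∀ j j' : Fin k, j < j' → ∀ s ∈ α j, ∀ t ∈ α j', s < t)
    {j j' : Fin k} (hjj : j < j') :
    psum (xseq p χ k) (α j) < psum (xseq p χ k) (α j') := by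
  set m := (α j').min' (hne j') with hm
  have h1 : psum (xseq p χ k) (α j') ∈ Bset p χ k m := sum_mem p χ k hp (hne j')
  have h2 := tail_bound p χ k hp h1
  have h3 : (psum (xseq p χ k) (α j) : ℕ) ≤ ∑ t ∈ Finset.range m, (xseq p χ k t : ℕ) := by
    rw [psum_coe _ (hne j)]
    exact Finset.sum_le_sum_of_subset (alpha_subset α hne hlt hjj)
  rw [← PNat.coe_lt_coe]
  omega

end
end MT

theorem milliken_taylor
    (k r : ℕ) (hk : 1 ≤ k) (hr : 1 ≤ r)
    (A : Fin r → Set (Finset ℕ+))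
    (hA : {E : Finset ℕ+ | E.card = k} = ⋃ i, A i) :
    ∃ (i : Fin r) (x : ℕ → ℕ+),
      ∀ α : Fin k → Finset ℕ,
        (∀ j, (α j).Nonempty) →
        (∀ j j' : Fin k, j < j' → ∀ s ∈ α j, ∀ t ∈ α j', s < t) →
        ∃ p : Fin k → ℕ+,
          (∀ j, (p j : ℕ) = ∑ t ∈ α j, (x t : ℕ)) ∧
          Finset.image p Finset.univ ∈ A i := by
  classical
  obtain ⟨U, hU, -⟩ := Hindman.exists_idempotent_ultrafilter_le_FS (fun _ => (1 : ℕ+))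
  set χ : List ℕ+ → Fin r := fun w =>
    if h : ∃ i, w.toFinset ∈ A i then h.choose else ⟨0, hr⟩ with hχ
  refine ⟨MT.gAux U χ k [], MT.xseq U χ k, ?_⟩
  intro α hne hlt
  set sfun : Fin k → ℕ+ := fun j => MT.psum (MT.xseq U χ k) (α j) with hsfun
  refine ⟨sfun, fun j => MT.psum_coe _ (hne j), ?_⟩
  have hmono : StrictMono sfun := fun j j' hjj => MT.sfun_strictmono U χ k hU α hne hlt hjj
  have hinj : Function.Injective sfun := hmono.injective
  set W : Finset ℕ+ := Finset.image sfun Finset.univ with hW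
  have hcard : W.card = k := by
    rw [hW, Finset.card_image_of_injective _ hinj]
    simp
  have hexists : ∃ i, W ∈ A i := by
    have : W ∈ {E : Finset ℕ+ | E.card = k} := hcard
    rw [hA] at this
    exact Set.mem_iUnion.mp this
  have hWlist : (((List.finRange k).take k).map sfun).toFinset = W := by
    rw [List.take_of_length_le (by simp)]
    ext a
    simp [hW, List.mem_map, eq_comm]
  have hchain := MT.chain U χ k hU α hne hlt k le_rfl
  rw [show k - k = 0 from Nat.sub_self k] at hchain
  have hgz : MT.gAux U χ 0 (((List.finRange k).take k).map sfun)
      = χ (((List.finRange k).take k).map sfun) := rfl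
  rw [hgz] at hchain
  have hspec : W ∈ A (χ (((List.finRange k).take k).map sfun)) := by
    rw [hχ]
    simp only
    rw [hWlist.symm] at hexists ⊢
    rw [dif_pos hexists]
    exact hexists.choose_spec
  rw [hchain] at hspec
  exact hspec
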